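/- Let λ ∈ [0,1) be a constant cooperation strength, W a propagation matrix, and suppose every sub-objective E_i is nonnegative (E_i(x) ≥ 0 for all configurations x). Starting from the initial state Ψ^{(0)}_i ≡ 0 for every i and iterating Ψ^{(k)} = T_λ(Ψ^{(k−1)}), the sequence of lower bound functions is monotonically nondecreasing: for every k ≥ 0 and every configuration x, ∑_{i=1}^n Ψ^{(k)}_i(x_i) ≤ ∑_{i=1}^n Ψ^{(k+1)}_i(x_i). -/

import Mathlib

open Finset Filter Topology

/-- A propagation matrix: nonnegative entries with unit column sums. -/
def IsPropagationMatrix {n : ℕ} (W : Fin n → Fin n → ℝ) : Prop :=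
  (∀ i j, 0 ≤ W i j) ∧ ∀ j, ∑ i, W i j = 1

/-- The basic cooperative optimization update `T_λ`:
`T_λ(Ψ)_i(a) = min_{x : x_i = a} ((1−λ) E_i(x) + λ ∑_j w_{ij} Ψ_j(x_j))`. -/
noncomputable def coopT {n : ℕ} {D : Fin n → Type} [∀ i, Fintype (D i)]
    [∀ i, Nonempty (D i)]
    (E : Fin n → ((i : Fin n) → D i) → ℝ) (W : Fin n → Fin n → ℝ) (lam : ℝ)
    (Ψ : (i : Fin n) → D i → ℝ) : (i : Fin n) → D i → ℝ :=
  fun i a =>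
    Finset.univ.inf' Finset.univ_nonempty
      (fun x : (j : Fin n) → D j =>
        (1 - lam) * E i (Function.update x i a) +
          lam * ∑ j, W i j * Ψ j (Function.update x i a j))

/-- The total objective `E(x) = ∑ i, E_i(x)`. -/
def objective {n : ℕ} {D : Fin n → Type}
    (E : Fin n → ((i : Fin n) → D i) → ℝ) (x : (i : Fin n) → D i) : ℝ :=
  ∑ i, E i x

/-- `x̃` is a consensus solution with respect to the state `Ψ` and cooperation strength
`lam`: for every `i`, `x̃` globally minimizes the modified sub-objective
`x ↦ (1−λ) E_i(x) + λ ∑_j w_{ij} Ψ_j(x_j)`. -/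
def IsConsensusState {n : ℕ} {D : Fin n → Type}
    (E : Fin n → ((i : Fin n) → D i) → ℝ) (W : Fin n → Fin n → ℝ) (lam : ℝ)
    (Ψ : (i : Fin n) → D i → ℝ) (xt : (i : Fin n) → D i) : Prop :=
  ∀ i, ∀ x : (j : Fin n) → D j,
    (1 - lam) * E i xt + lam * ∑ j, W i j * Ψ j (xt j)
      ≤ (1 - lam) * E i x + lam * ∑ j, W i j * Ψ j (x j)

/-- With nonnegative sub-objectives and the zero initial state, the
sequence of lower bound functions produced by iterating `T_λ` is monotonically
nondecreasing. -/
theorem lower_bounds_monotone (n : ℕ) (hn : 1 ≤ n) (D : Fin n → Type)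
    [∀ i, Fintype (D i)] [∀ i, Nonempty (D i)]
    (E : Fin n → ((i : Fin n) → D i) → ℝ)
    (hE : ∀ i (x : (j : Fin n) → D j), 0 ≤ E i x)
    (W : Fin n → Fin n → ℝ) (hW : IsPropagationMatrix W)
    (lam : ℝ) (hlam0 : 0 ≤ lam) (hlam1 : lam < 1)
    (Psi : ℕ → (i : Fin n) → D i → ℝ)
    (hinit : ∀ i (a : D i), Psi 0 i a = 0)
    (hstep : ∀ k, Psi (k + 1) = coopT E W lam (Psi k)) :
    ∀ (k : ℕ) (x : (i : Fin n) → D i),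
      ∑ i, Psi k i (x i) ≤ ∑ i, Psi (k + 1) i (x i) := by
  have key : ∀ (k : ℕ) (i : Fin n) (a : D i), Psi k i a ≤ Psi (k + 1) i a := by
    intro k
    induction k with
    | zero =>
      intro i a
      rw [hinit i a, hstep 0]
      unfold coopT
      apply Finset.le_inf'
      intro x _
      have h1 : 0 ≤ (1 - lam) * E i (Function.update x i a) :=
        mul_nonneg (by linarith) (hE _ _)
      have h2 : (∑ j, W i j * Psi 0 j (Function.update x i a j)) = 0 := by
        apply Finset.sum_eq_zero
        intro j _
        rw [hinit]; ring
      rw [h2]; linarith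
    | succ k ih =>
      intro i a
      rw [hstep (k + 1)]; conv_lhs => rw [hstep k]
      unfold coopT
      apply Finset.le_inf'
      intro x hx
      refine le_trans (Finset.inf'_le _ hx) ?_
      apply add_le_add le_rfl
      apply mul_le_mul_of_nonneg_left _ hlam0
      apply Finset.sum_le_sum
      intro j _
      exact mul_le_mul_of_nonneg_left (ih j _) (hW.1 i j)
  intro k x
  exact Finset.sum_le_sum fun i _ => key k i (x i)
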